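/- The zeroth differential Hochschild cohomology of C^∞(ℝ^n,ℂ) with values in W is isomorphic, as a ℂ[[λ]]-module, to C^∞(ℝ^n,ℂ)[[λ]]; that is, the set of a ∈ W satisfying π*(f) ⋆_W a = a ⋆_W π*(f) for all f ∈ C^∞(ℝ^n,ℂ) is isomorphic to C^∞(ℝ^n,ℂ)[[λ]]. -/

import Mathlib

set_option synthInstance.maxHeartbeats 1000000
set_option maxHeartbeats 1000000

open scoped BigOperators

noncomputable section

/-- The subalgebra of smooth complex-valued functions on `ℝⁿ`. -/
def smoothSubalgebra (n : ℕ) : Subalgebra ℂ ((Fin n → ℝ) → ℂ) where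
  carrier := {f | ContDiff ℝ (⊤ : ℕ∞) f}
  mul_mem' hf hg := by simp only [Set.mem_setOf_eq] at *; exact hf.mul hg
  add_mem' hf hg := by simp only [Set.mem_setOf_eq] at *; exact hf.add hg
  algebraMap_mem' c := by
    show ContDiff ℝ (⊤ : ℕ∞) (fun _ => c)
    exact contDiff_const

/-- `C^∞(ℝⁿ, ℂ)` as a commutative `ℂ`-algebra. -/
abbrev Cinf (n : ℕ) : Type := smoothSubalgebra n

theorem Cinf.smooth {n : ℕ} (f : Cinf n) : ContDiff ℝ (⊤ : ℕ∞) f.1 := f.2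

/-- Complex conjugation as the `*`-involution on `C^∞(ℝⁿ, ℂ)`. -/
instance (n : ℕ) : StarRing (Cinf n) where
  star f := ⟨fun x => (starRingEnd ℂ) (f.1 x), by
    exact Complex.conjCLE.toContinuousLinearMap.contDiff.comp f.smooth⟩
  star_involutive f := Subtype.ext (funext fun x => by simp)
  star_mul f g := Subtype.ext (funext fun x => by
    simp only [MulMemClass.coe_mul, Pi.mul_apply, map_mul]; ring)
  star_add f g := Subtype.ext (funext fun x => by
    simp only [AddMemClass.coe_add, Pi.add_apply, map_add])

/-- The partial derivative `∂/∂qᵏ` on smooth functions. -/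
def pderivQ {n : ℕ} (k : Fin n) (f : Cinf n) : Cinf n :=
  ⟨fun x => fderiv ℝ f.1 x (Pi.single k 1), by
    exact (f.smooth.fderiv_right (m := (⊤ : ℕ∞)) (by norm_cast)).clm_apply contDiff_const⟩

/-- `W₀ = C^∞(ℝⁿ,ℂ)[[p₁,…,pₙ]]`. -/
abbrev W0 (n : ℕ) : Type := MvPowerSeries (Fin n) (Cinf n)

/-- `W = W₀[[λ]]`. -/
abbrev Wf (n : ℕ) : Type := PowerSeries (W0 n)

/-- `∂/∂qᵏ` on `W₀`, acting on the smooth coefficients. -/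
def Dq {n : ℕ} (k : Fin n) (a : W0 n) : W0 n := fun m => pderivQ k (a m)

/-- The formal partial derivative `∂/∂pₖ` on `W₀`. -/
def Dp {n : ℕ} (k : Fin n) (a : W0 n) : W0 n :=
  fun m => (m k + 1 : ℕ) • a (m + Finsupp.single k 1)

/-- The natural inclusion `π* : C^∞(ℝⁿ) → W₀`. -/
def piW0 {n : ℕ} (f : Cinf n) : W0 n := MvPowerSeries.C (σ := Fin n) (R := Cinf n) f

/-- The natural inclusion `π* : C^∞(ℝⁿ) → W`. -/
def piW {n : ℕ} (f : Cinf n) : Wf n := PowerSeries.C (R := W0 n) (piW0 f)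

/-- One factor of the bidifferential operator
`P = Σₖ (∂_{qᵏ} ⊗ ∂_{pₖ} − ∂_{pₖ} ⊗ ∂_{qᵏ})`: the derivative hitting the first
tensor factor (`true` records the summand `∂_{qᵏ} ⊗ ∂_{pₖ}`). -/
def fstDeriv {n : ℕ} : Fin n × Bool → W0 n → W0 n
  | (k, true) => Dq k
  | (k, false) => Dp k

/-- The derivative hitting the second tensor factor. -/
def sndDeriv {n : ℕ} : Fin n × Bool → W0 n → W0 n
  | (k, true) => Dp k
  | (k, false) => Dq k

/-- The sign of each summand of `P`. -/
def pSign {n : ℕ} : Fin n × Bool → ℂ := fun kb => if kb.2 then 1 else -1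

/-- Iterated application of the first-factor derivatives along a sequence `t`. -/
def iterFst {n r : ℕ} (t : Fin r → Fin n × Bool) (a : W0 n) : W0 n :=
  (List.ofFn t).foldr (fun kb x => fstDeriv kb x) a

/-- Iterated application of the second-factor derivatives along a sequence `t`. -/
def iterSnd {n r : ℕ} (t : Fin r → Fin n × Bool) (a : W0 n) : W0 n :=
  (List.ofFn t).foldr (fun kb x => sndDeriv kb x) a

/-- `μ ∘ Pʳ (a ⊗ b)`: the `r`-th power of the Poisson bidifferential operator
`P = Σₖ (∂_{qᵏ} ⊗ ∂_{pₖ} − ∂_{pₖ} ⊗ ∂_{qᵏ})` followed by the (undeformed)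
multiplication `μ`. -/
def moyalP {n : ℕ} (r : ℕ) (a b : W0 n) : W0 n :=
  ∑ t : Fin r → Fin n × Bool,
    (∏ j, pSign (t j)) • (iterFst t a * iterSnd t b)

/-- The formal Weyl–Moyal star product
`a ⋆_W b = μ ∘ exp((iλ/2) Σₖ (∂_{qᵏ} ⊗ ∂_{pₖ} − ∂_{pₖ} ⊗ ∂_{qᵏ}))(a ⊗ b)`
on `W = W₀[[λ]]`. -/
def weylMul {n : ℕ} (a b : Wf n) : Wf n :=
  PowerSeries.mk fun ℓ => ∑ p ∈ Finset.HasAntidiagonal.antidiagonal ℓ, ∑ q ∈ Finset.HasAntidiagonal.antidiagonal p.2,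
    ((Complex.I / 2) ^ p.1 / (p.1.factorial : ℂ)) •
      moyalP p.1 (PowerSeries.coeff (R := (W0 n)) q.1 a) (PowerSeries.coeff (R := (W0 n)) q.2 b)

/-- Complex conjugation on `W₀` (the formal variables `p` are treated as real). -/
def starW0 {n : ℕ} (a : W0 n) : W0 n := fun m => star (a m)

/-- Complex conjugation on `W = W₀[[λ]]` (`λ` and the `p`'s are treated as real). -/
def starWf {n : ℕ} (w : Wf n) : Wf n :=
  PowerSeries.mk fun ℓ => starW0 (PowerSeries.coeff (R := (W0 n)) ℓ w)

/-- The classical limit `cl : W → W₀`, setting `λ = 0`. -/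
def clW {n : ℕ} (w : Wf n) : W0 n := PowerSeries.coeff (R := (W0 n)) 0 w

/-- The action of a formal series `c ∈ ℂ[[λ]]` on `W`, making `W` a
`ℂ[[λ]]`-module (the element `c(λ)·1` is central, so deformed and undeformed
multiplication by it agree). -/
def lamSmulW {n : ℕ} (c : PowerSeries ℂ) (w : Wf n) : Wf n :=
  PowerSeries.map (algebraMap ℂ (W0 n)) c * w

/-- The action of `c ∈ ℂ[[λ]]` on `C^∞(ℝⁿ)[[λ]]`. -/
def lamSmulS {n : ℕ} (c : PowerSeries ℂ) (g : PowerSeries (Cinf n)) : PowerSeries (Cinf n) :=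
  PowerSeries.map (algebraMap ℂ (Cinf n)) c * g

end
/-! ### Generic algebraic notions: differential operators, Hochschild cochains,
formal deformations and positive functionals. -/

/-- Grothendieck's algebraic notion of a differential operator of order at most `k`
from a commutative ring `A` to a module `M`, with the action of `A` on `M` given
explicitly by `sm`.  An operator of order `≤ 0` is a module map, and `D` has order
`≤ k+1` if all the commutators `[D, a]` have order `≤ k`. -/
def IsDiffOpLE {A : Type*} [CommRing A] {M : Type*} [AddCommGroup M]
    (sm : A → M → M) : ℕ → (A → M) → Prop
  | 0 => fun D => ∀ a x, D (a * x) = sm a (D x)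
  | (k+1) => fun D => ∀ a, IsDiffOpLE sm k fun x => D (a * x) - sm a (D x)

/-- `D : A → M` is a differential operator if it has some finite order. -/
def IsDiffOp {A : Type*} [CommRing A] {M : Type*} [AddCommGroup M]
    (sm : A → M → M) (D : A → M) : Prop :=
  ∃ k, IsDiffOpLE sm k D

/-- The tuple obtained from `f : Fin (k+1) → A` by multiplying the `i`-th and the
`(i+1)`-st entries. -/
def mergeAt {A : Type*} [Mul A] {k : ℕ} (f : Fin (k + 1) → A) (i : Fin k) : Fin k → A :=
  fun j =>
    if (j : ℕ) < (i : ℕ) then f j.castSucc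
    else if (j : ℕ) = (i : ℕ) then f i.castSucc * f i.succ
    else f j.succ

/-- The Hochschild coboundary operator on `k`-cochains of a commutative ring `A` with
values in an `(A,A)`-bimodule `M`, whose left and right actions are given explicitly by
`L` and `R`:
`(δφ)(f₀,…,f_k) = f₀·φ(f₁,…,f_k) + Σᵢ (−1)^{i+1} φ(f₀,…,fᵢfᵢ₊₁,…,f_k) + (−1)^{k+1} φ(f₀,…,f_{k−1})·f_k`. -/
def hDelta {A : Type*} [CommRing A] {M : Type*} [AddCommGroup M]
    (L : A → M → M) (R : M → A → M) {k : ℕ} (φ : (Fin k → A) → M) :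
    (Fin (k + 1) → A) → M := fun f =>
  L (f 0) (φ fun i => f i.succ)
    + ∑ i : Fin k, (-1 : ℤ) ^ ((i : ℕ) + 1) • φ (mergeAt f i)
    + (-1 : ℤ) ^ (k + 1) • R (φ fun i => f i.castSucc) (f (Fin.last k))

/-- A `k`-multilinear cochain (over `ℂ`). -/
def IsMultilinC {A : Type*} [CommRing A] [Algebra ℂ A] {M : Type*} [AddCommGroup M]
    [Module ℂ M] {k : ℕ} (φ : (Fin k → A) → M) : Prop :=
  (∀ (f : Fin k → A) (i : Fin k) (x y : A),
      φ (Function.update f i (x + y)) = φ (Function.update f i x) + φ (Function.update f i y)) ∧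
  (∀ (f : Fin k → A) (i : Fin k) (c : ℂ) (x : A),
      φ (Function.update f i (c • x)) = c • φ (Function.update f i x))

/-- The total antisymmetrization operator on `k`-cochains. -/
noncomputable def altC {A : Type*} {M : Type*} [AddCommGroup M] [Module ℂ M] {k : ℕ}
    (φ : (Fin k → A) → M) : (Fin k → A) → M := fun f =>
  (k.factorial : ℂ)⁻¹ • ∑ σ : Equiv.Perm (Fin k), ((Equiv.Perm.sign σ : ℤ)) • φ (f ∘ σ)

/-- The formal deformation `F ⋆ G = Σₙ λⁿ Σ_{r+i+j=n} C_r(F_i, G_j)` of an algebra `A`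
determined by a family of "cochains" `C_r : A × A → A`, where `C_0` is meant to be the
undeformed product.  This is the general form of a star product. -/
noncomputable def starMulC {A : Type*} [Ring A] (C : ℕ → A → A → A) (F G : PowerSeries A) :
    PowerSeries A :=
  PowerSeries.mk fun ℓ => ∑ p ∈ Finset.HasAntidiagonal.antidiagonal ℓ, ∑ q ∈ Finset.HasAntidiagonal.antidiagonal p.2,
    C p.1 (PowerSeries.coeff (R := A) q.1 F) (PowerSeries.coeff (R := A) q.2 G)

/-- The coefficientwise involution on `A[[λ]]` (the formal parameter `λ` is real). -/
noncomputable def starSeries {A : Type*} [Semiring A] [Star A] (F : PowerSeries A) :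
    PowerSeries A :=
  PowerSeries.mk fun ℓ => star (PowerSeries.coeff (R := A) ℓ F)

/-- `C` is a (bidifferential) star product on the commutative `ℂ`-algebra `A`:
`C_0` is the pointwise product, each `C_r` is `ℂ`-bilinear and a differential operator
in each argument, and the total product on `A[[λ]]` is associative. -/
structure IsStarProduct (A : Type*) [CommRing A] [Algebra ℂ A] (C : ℕ → A → A → A) :
    Prop where
  C_zero : ∀ f g, C 0 f g = f * g
  add_left : ∀ r f f' g, C r (f + f') g = C r f g + C r f' g
  add_right : ∀ r f g g', C r f (g + g') = C r f g + C r f g'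
  smul_left : ∀ (r : ℕ) (c : ℂ) f g, C r (c • f) g = c • C r f g
  smul_right : ∀ (r : ℕ) (c : ℂ) f g, C r f (c • g) = c • C r f g
  diff_left : ∀ r g, IsDiffOp (· * ·) fun f => C r f g
  diff_right : ∀ r f, IsDiffOp (· * ·) fun g => C r f g
  assoc : ∀ F G H, starMulC C (starMulC C F G) H = starMulC C F (starMulC C G H)

/-- `P` is a Poisson bracket on the commutative `ℂ`-algebra `A`. -/
structure IsPoissonBracket (A : Type*) [CommRing A] [Algebra ℂ A] (P : A → A → A) :
    Prop where
  antisymm : ∀ f g, P f g = - P g f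
  add_left : ∀ f f' g, P (f + f') g = P f g + P f' g
  smul_left : ∀ (c : ℂ) f g, P (c • f) g = c • P f g
  leibniz : ∀ f g h, P f (g * h) = P f g * h + g * P f h
  jacobi : ∀ f g h, P f (P g h) + P g (P h f) + P h (P f g) = 0

/-- The star product `C` quantizes the Poisson bracket `P`:
`C₁(f,g) − C₁(g,f) = i {f, g}`. -/
def QuantizesPB {A : Type*} [CommRing A] [Algebra ℂ A] (C : ℕ → A → A → A)
    (P : A → A → A) : Prop :=
  ∀ f g, C 1 f g - C 1 g f = Complex.I • P f g

/-- The star product `C` is Hermitian: `conj (F ⋆ G) = (conj G) ⋆ (conj F)`. -/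
def IsHermitianSP {A : Type*} [Ring A] [Star A] (C : ℕ → A → A → A) : Prop :=
  ∀ F G, starSeries (starMulC C F G) = starMulC C (starSeries G) (starSeries F)

/-- The `ℂ[[λ]]`-linear functional `ω = Σᵣ λʳ ωᵣ : A[[λ]] → ℂ[[λ]]` determined by a
family of `ℂ`-linear functionals `ωᵣ : A → ℂ`. -/
noncomputable def extFun {A : Type*} [Ring A] [Module ℂ A] (ω : ℕ → A →ₗ[ℂ] ℂ)
    (F : PowerSeries A) : PowerSeries ℂ :=
  PowerSeries.mk fun ℓ => ∑ q ∈ Finset.HasAntidiagonal.antidiagonal ℓ, ω q.1 (PowerSeries.coeff (R := A) q.2 F)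

/-- `s ≥ 0` in `ℝ[[λ]] ⊂ ℂ[[λ]]`: all coefficients of `s` are real and `s` is either zero
or its lowest non-vanishing coefficient is positive.  This is the ring ordering of
`ℝ[[λ]]` in which `λ` is positive and infinitesimally small. -/
def IsNonnegSeries (s : PowerSeries ℂ) : Prop :=
  (∀ m, (PowerSeries.coeff (R := ℂ) m s).im = 0) ∧
    (s = 0 ∨ ∃ N, (∀ m, m < N → PowerSeries.coeff (R := ℂ) m s = 0) ∧ 0 < (PowerSeries.coeff (R := ℂ) N s).re)

/-- The entrywise extension of a family `C_r` of cochains on `A` to matrices,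
`(C_r(X,Y))_{ij} = Σ_l C_r(X_{il}, Y_{lj})`. -/
noncomputable def matC {A : Type*} [Ring A] (N : ℕ) (C : ℕ → A → A → A) :
    ℕ → Matrix (Fin N) (Fin N) A → Matrix (Fin N) (Fin N) A → Matrix (Fin N) (Fin N) A :=
  fun r X Y i j => ∑ l, C r (X i l) (Y l j)
/-! ### The bimodule structures on `W` and `W₀`, the degree map, and related notions. -/

/-- Left action of `C^∞(ℝⁿ)` on `W` by `⋆_W`-multiplication with `π*(f)`. -/
noncomputable def Lw {n : ℕ} (f : Cinf n) (w : Wf n) : Wf n := weylMul (piW f) w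

/-- Right action of `C^∞(ℝⁿ)` on `W` by `⋆_W`-multiplication with `π*(f)`. -/
noncomputable def Rw {n : ℕ} (w : Wf n) (f : Cinf n) : Wf n := weylMul w (piW f)

/-- The pointwise (undeformed) action of `C^∞(ℝⁿ)` on `W`. -/
noncomputable def ptSmulW {n : ℕ} (f : Cinf n) (w : Wf n) : Wf n := piW f * w

/-- The pointwise left action of `C^∞(ℝⁿ)` on `W₀`. -/
noncomputable def L0 {n : ℕ} (f : Cinf n) (b : W0 n) : W0 n := piW0 f * b

/-- The pointwise right action of `C^∞(ℝⁿ)` on `W₀`. -/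
noncomputable def R0 {n : ℕ} (b : W0 n) (f : Cinf n) : W0 n := b * piW0 f

/-- A `W`-valued cochain is differential if it is a differential operator in each
argument. -/
def IsDiffCochainW {n k : ℕ} (φ : (Fin k → Cinf n) → Wf n) : Prop :=
  ∀ (f : Fin k → Cinf n) (i : Fin k), IsDiffOp ptSmulW fun x => φ (Function.update f i x)

/-- A `W₀`-valued cochain is differential if it is a differential operator in each
argument. -/
def IsDiffCochain0 {n k : ℕ} (φ : (Fin k → Cinf n) → W0 n) : Prop :=
  ∀ (f : Fin k → Cinf n) (i : Fin k), IsDiffOp L0 fun x => φ (Function.update f i x)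

/-- The involution `φ ↦ φ*` on `W`-valued Hochschild cochains,
`φ*(f₁,…,f_r) = conj (φ (conj f_r, …, conj f₁))`. -/
noncomputable def cochainStar {n r : ℕ} (φ : (Fin r → Cinf n) → Wf n) :
    (Fin r → Cinf n) → Wf n := fun f =>
  starWf (φ fun i => star (f i.rev))

/-- The Euler operator `Σᵢ pᵢ ∂/∂pᵢ` on `W₀`. -/
noncomputable def pEuler {n : ℕ} (b : W0 n) : W0 n :=
  ∑ i : Fin n, MvPowerSeries.X i * Dp i b

/-- The degree map `deg = Σᵢ pᵢ ∂/∂pᵢ + λ ∂/∂λ` on `W`. -/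
noncomputable def degW {n : ℕ} (w : Wf n) : Wf n :=
  PowerSeries.mk fun ℓ =>
    ℓ • PowerSeries.coeff (R := (W0 n)) ℓ w + pEuler (PowerSeries.coeff (R := (W0 n)) ℓ w)

/-- `w ∈ W` is homogeneous of degree `k` with respect to `deg`. -/
def IsDegHomogElem {n : ℕ} (k : ℕ) (w : Wf n) : Prop := degW w = k • w

/-- A map `τ : C^∞(ℝⁿ) → W` is homogeneous of degree `k` with respect to `deg`. -/
def IsDegHomog {n : ℕ} (k : ℕ) (τ : Cinf n → Wf n) : Prop :=
  ∀ f, degW (τ f) = k • τ f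

/-- `τ : C^∞(ℝⁿ) → W` is an element of `HC¹(C^∞(ℝⁿ), W)`: it is `ℂ`-linear and a
differential operator. -/
def IsHC1 {n : ℕ} (τ : Cinf n → Wf n) : Prop :=
  (∀ f g, τ (f + g) = τ f + τ g) ∧ (∀ (c : ℂ) (f : Cinf n), τ (c • f) = c • τ f) ∧
    IsDiffOp ptSmulW τ

/-- `w ∈ W` lies in the part of `deg`-degree at least `N` (all components of total
degree `< N` in the `pᵢ` and `λ` vanish).  Used to express convergence of the series
`Σₖ τₖ` in the `deg`-adic topology. -/
def degOrderGE {n : ℕ} (N : ℕ) (w : Wf n) : Prop :=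
  ∀ (ℓ : ℕ) (m : Fin n →₀ ℕ),
    (m.sum fun _ e => e) + ℓ < N → PowerSeries.coeff (R := (W0 n)) ℓ w m = 0

/-- The component of `w ∈ W` of `deg`-degree exactly `d`. -/
noncomputable def degComp {n : ℕ} (d : ℕ) (w : Wf n) : Wf n :=
  PowerSeries.mk fun ℓ =>
    (fun m => if (m.sum fun _ e => e) + ℓ = d then PowerSeries.coeff (R := (W0 n)) ℓ w m else 0 :
      W0 n)

/-- The `λ`-linear extension of the finite sum `τ₀ + ⋯ + τ_{k−1}` to a map
`C^∞(ℝⁿ)[[λ]] → W`. -/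
noncomputable def extSum {n : ℕ} (τ : ℕ → Cinf n → Wf n) (k : ℕ)
    (F : PowerSeries (Cinf n)) : Wf n :=
  PowerSeries.mk fun ℓ => ∑ q ∈ Finset.HasAntidiagonal.antidiagonal ℓ, ∑ i ∈ Finset.range k,
    PowerSeries.coeff (R := (W0 n)) q.1 (τ i (PowerSeries.coeff (R := (Cinf n)) q.2 F))

/-- The `λ`-linear (that is, `ℂ[[λ]]`-linear) extension
`π* : C^∞(ℝⁿ)[[λ]] → W` of the natural inclusion. -/
noncomputable def piHat {n : ℕ} (F : PowerSeries (Cinf n)) : Wf n :=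
  PowerSeries.map (MvPowerSeries.C (σ := Fin n) (R := Cinf n)) F

/-- The canonical Poisson bracket `{a,b} = Σₖ (∂a/∂qᵏ ∂b/∂pₖ − ∂a/∂pₖ ∂b/∂qᵏ)` on the
formal cotangent bundle, i.e. on `W₀`. -/
noncomputable def pbCan {n : ℕ} (a b : W0 n) : W0 n :=
  ∑ k : Fin n, (Dq k a * Dp k b - Dp k a * Dq k b)

/-! ### Auxiliary development for `hochschild_HH0_iso`. -/

namespace HH0Aux

open PowerSeries Finset

variable {n : ℕ}

/-! #### Basic facts about `pderivQ`. -/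

lemma pderivQ_of_const (k : Fin n) (f : Cinf n) (c : ℂ) (hf : f.1 = fun _ => c) :
    pderivQ k f = 0 := by
  apply Subtype.ext
  funext x
  show fderiv ℝ f.1 x (Pi.single k 1) = (0 : Cinf n).1 x
  rw [hf]
  simp

lemma pderivQ_zero (k : Fin n) : pderivQ k (0 : Cinf n) = 0 :=
  pderivQ_of_const k 0 0 rfl

lemma pderivQ_algebraMap (k : Fin n) (c : ℂ) :
    pderivQ k (algebraMap ℂ (Cinf n) c) = 0 :=
  pderivQ_of_const k _ c rfl

/-- The coordinate function `qᵏ` as a continuous linear map. -/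
noncomputable def coordCLM (k : Fin n) : (Fin n → ℝ) →L[ℝ] ℂ :=
  Complex.ofRealCLM.comp (ContinuousLinearMap.proj k)

/-- The coordinate function `qᵏ` as an element of `C^∞(ℝⁿ)`. -/
noncomputable def coordQ (k : Fin n) : Cinf n :=
  ⟨⇑(coordCLM k), by
    show ContDiff ℝ ((⊤ : ℕ∞)) ⇑(coordCLM k)
    exact (coordCLM k).contDiff⟩

lemma pderivQ_coordQ (j k : Fin n) :
    pderivQ j (coordQ k) = algebraMap ℂ (Cinf n) (if k = j then 1 else 0) := by
  apply Subtype.ext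
  funext x
  have hR : ((algebraMap ℂ (Cinf n)) (if k = j then 1 else 0)).1 x
      = (if k = j then (1 : ℂ) else 0) := by
    by_cases h : k = j <;> simp [h] <;> rfl
  rw [hR]
  show fderiv ℝ (⇑(coordCLM k)) x (Pi.single j 1) = _
  rw [ContinuousLinearMap.fderiv]
  simp only [coordCLM, ContinuousLinearMap.comp_apply, ContinuousLinearMap.proj_apply,
    Complex.ofRealCLM_apply]
  rw [Pi.single_apply]
  by_cases h : k = j <;> simp [h]

/-! #### `p`-constant elements of `W₀` and first derivatives. -/

/-- `b ∈ W₀` is constant in the `p`'s. -/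
def PC0 (b : W0 n) : Prop := ∀ m : Fin n →₀ ℕ, m ≠ 0 → b m = 0

lemma pc0_zero : PC0 (0 : W0 n) := fun _ _ => rfl

lemma pc0_piW0 (f : Cinf n) : PC0 (piW0 f) := by
  intro m hm
  have h := MvPowerSeries.coeff_C (R := Cinf n) m f
  rw [if_neg hm] at h
  exact h

lemma piW0_apply_zero (f : Cinf n) : (piW0 f) (0 : Fin n →₀ ℕ) = f := by
  have h := MvPowerSeries.coeff_C (R := Cinf n) (0 : Fin n →₀ ℕ) f
  rw [if_pos rfl] at h
  exact h

lemma piW0_zero : piW0 (0 : Cinf n) = (0 : W0 n) :=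
  map_zero (MvPowerSeries.C (σ := Fin n) (R := Cinf n))

lemma piW0_one : piW0 (1 : Cinf n) = (1 : W0 n) :=
  map_one (MvPowerSeries.C (σ := Fin n) (R := Cinf n))

lemma Dq_zero (k : Fin n) : Dq k (0 : W0 n) = 0 :=
  funext fun _ => pderivQ_zero k

lemma Dp_zero (k : Fin n) : Dp k (0 : W0 n) = 0 :=
  funext fun m => smul_zero _

lemma add_single_ne_zero (m : Fin n →₀ ℕ) (k : Fin n) :
    m + Finsupp.single k 1 ≠ 0 := by
  intro h0
  have h1 := DFunLike.congr_fun h0 k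
  simp [Finsupp.add_apply, Finsupp.single_eq_same] at h1

lemma Dp_of_pc0 {b : W0 n} (h : PC0 b) (k : Fin n) : Dp k b = 0 := by
  funext m
  show (m k + 1 : ℕ) • b (m + Finsupp.single k 1) = 0
  rw [h _ (add_single_ne_zero m k), smul_zero]

lemma pc0_Dq {b : W0 n} (h : PC0 b) (k : Fin n) : PC0 (Dq k b) := by
  intro m hm
  show pderivQ k (b m) = 0
  rw [h m hm, pderivQ_zero]

lemma pc0_Dp {b : W0 n} (h : PC0 b) (k : Fin n) : PC0 (Dp k b) := by
  rw [Dp_of_pc0 h]; exact pc0_zero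

lemma Dq_piW0 (k : Fin n) (f : Cinf n) : Dq k (piW0 f) = piW0 (pderivQ k f) := by
  funext m
  show pderivQ k ((piW0 f) m) = (piW0 (pderivQ k f)) m
  by_cases hm : m = 0
  · subst hm
    rw [piW0_apply_zero, piW0_apply_zero]
  · rw [pc0_piW0 f m hm, pc0_piW0 _ m hm, pderivQ_zero]

lemma Dp_piW0 (k : Fin n) (f : Cinf n) : Dp k (piW0 f) = 0 :=
  Dp_of_pc0 (pc0_piW0 f) k

/-- All first derivatives of `b` vanish. -/
def AD (b : W0 n) : Prop := (∀ k, Dq k b = 0) ∧ (∀ k, Dp k b = 0)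

lemma ad_zero : AD (0 : W0 n) := ⟨Dq_zero, Dp_zero⟩

lemma ad_piW0_algebraMap (c : ℂ) : AD (piW0 (algebraMap ℂ (Cinf n) c)) :=
  ⟨fun k => by rw [Dq_piW0, pderivQ_algebraMap]; exact map_zero (MvPowerSeries.C),
   fun k => Dp_piW0 k _⟩

lemma fstDeriv_zero (kb : Fin n × Bool) : fstDeriv kb (0 : W0 n) = 0 := by
  rcases kb with ⟨k, _ | _⟩
  · exact Dp_zero k
  · exact Dq_zero k

lemma sndDeriv_zero (kb : Fin n × Bool) : sndDeriv kb (0 : W0 n) = 0 := by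
  rcases kb with ⟨k, _ | _⟩
  · exact Dq_zero k
  · exact Dp_zero k

lemma fstDeriv_of_ad {b : W0 n} (h : AD b) (kb : Fin n × Bool) : fstDeriv kb b = 0 := by
  rcases kb with ⟨k, _ | _⟩
  · exact h.2 k
  · exact h.1 k

lemma sndDeriv_of_ad {b : W0 n} (h : AD b) (kb : Fin n × Bool) : sndDeriv kb b = 0 := by
  rcases kb with ⟨k, _ | _⟩
  · exact h.1 k
  · exact h.2 k

lemma pc0_fstDeriv {b : W0 n} (h : PC0 b) (kb : Fin n × Bool) : PC0 (fstDeriv kb b) := by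
  rcases kb with ⟨k, _ | _⟩
  · exact pc0_Dp h k
  · exact pc0_Dq h k

lemma pc0_sndDeriv {b : W0 n} (h : PC0 b) (kb : Fin n × Bool) : PC0 (sndDeriv kb b) := by
  rcases kb with ⟨k, _ | _⟩
  · exact pc0_Dq h k
  · exact pc0_Dp h k

/-! #### Foldr lemmas. -/

section Foldr

variable (D : Fin n × Bool → W0 n → W0 n)

lemma foldr_zero (h0 : ∀ kb, D kb 0 = 0) (l : List (Fin n × Bool)) :
    l.foldr (fun kb x => D kb x) (0 : W0 n) = 0 := by
  induction l with
  | nil => rfl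
  | cons kb l ih =>
    show D kb (l.foldr (fun kb x => D kb x) 0) = 0
    rw [ih, h0]

lemma foldr_pc0 (hpc : ∀ kb b, PC0 b → PC0 (D kb b)) {b : W0 n} (hb : PC0 b)
    (l : List (Fin n × Bool)) : PC0 (l.foldr (fun kb x => D kb x) b) := by
  induction l with
  | nil => exact hb
  | cons kb l ih => exact hpc kb _ ih

lemma foldr_ad (hAD : ∀ kb b, AD b → D kb b = 0) {b : W0 n} (hb : ∀ kb, AD (D kb b)) (l : List (Fin n × Bool))
    (hl : l ≠ []) : AD (l.foldr (fun kb x => D kb x) b) := by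
  induction l with
  | nil => exact absurd rfl hl
  | cons kb l ih =>
    cases l with
    | nil => exact hb kb
    | cons kb' l' =>
      show AD (D kb ((kb' :: l').foldr (fun kb x => D kb x) b))
      rw [hAD kb _ (ih (by simp))]
      exact ad_zero

lemma foldr_eq_zero_of_two_le (hAD : ∀ kb b, AD b → D kb b = 0) {b : W0 n} (hb : ∀ kb, AD (D kb b))
    (l : List (Fin n × Bool)) (hl : 2 ≤ l.length) :
    l.foldr (fun kb x => D kb x) b = 0 := by
  cases l with
  | nil => simp at hl
  | cons kb l =>
    cases l with
    | nil => simp at hl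
    | cons kb' l' =>
      show D kb ((kb' :: l').foldr (fun kb x => D kb x) b) = 0
      exact hAD kb _ (foldr_ad D hAD hb (kb' :: l') (by simp))

end Foldr

lemma iterFst_zero {r : ℕ} (t : Fin r → Fin n × Bool) : iterFst t (0 : W0 n) = 0 :=
  foldr_zero _ fstDeriv_zero _

lemma iterSnd_zero {r : ℕ} (t : Fin r → Fin n × Bool) : iterSnd t (0 : W0 n) = 0 :=
  foldr_zero _ sndDeriv_zero _

/-! #### `moyalP` computations. -/

lemma moyalP_left_zero (r : ℕ) (b : W0 n) : moyalP r (0 : W0 n) b = 0 := by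
  apply Finset.sum_eq_zero
  intro t _
  rw [iterFst_zero, zero_mul, smul_zero]

lemma moyalP_zero' (a b : W0 n) : moyalP 0 a b = a * b := by
  rw [moyalP]
  rw [Fintype.sum_unique]
  show (∏ j : Fin 0, pSign _) • (iterFst _ a * iterSnd _ b) = a * b
  rw [Finset.prod_of_isEmpty]
  rw [one_smul]
  rfl

lemma moyalP_one' (a b : W0 n) :
    moyalP 1 a b = ∑ kb : Fin n × Bool, pSign kb • (fstDeriv kb a * sndDeriv kb b) := by
  rw [moyalP]
  apply Fintype.sum_equiv (Equiv.funUnique (Fin 1) (Fin n × Bool))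
  intro t
  have h1 : iterFst t a = fstDeriv (t 0) a := rfl
  have h2 : iterSnd t b = sndDeriv (t 0) b := rfl
  rw [h1, h2, Fin.prod_univ_one]
  rfl

lemma moyalP_one_coordQ_left (k : Fin n) (b : W0 n) :
    moyalP 1 (piW0 (coordQ k)) b = Dp k b := by
  rw [moyalP_one']
  rw [Finset.sum_eq_single (k, true)]
  · show pSign (k, true) • (Dq k (piW0 (coordQ k)) * Dp k b) = Dp k b
    rw [Dq_piW0, pderivQ_coordQ, if_pos rfl, map_one, piW0_one]
    show (1 : ℂ) • ((1 : W0 n) * Dp k b) = Dp k b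
    rw [one_mul, one_smul]
  · rintro ⟨j, _ | _⟩ _ hne
    · show pSign (j, false) • (Dp j (piW0 (coordQ k)) * Dq j b) = 0
      rw [Dp_piW0, zero_mul, smul_zero]
    · show pSign (j, true) • (Dq j (piW0 (coordQ k)) * Dp j b) = 0
      have hj : k ≠ j := fun h => hne (by rw [h])
      rw [Dq_piW0, pderivQ_coordQ, if_neg hj, map_zero, piW0_zero, zero_mul, smul_zero]
  · intro h
    exact absurd (Finset.mem_univ _) h

lemma moyalP_one_coordQ_right (k : Fin n) (b : W0 n) :
    moyalP 1 b (piW0 (coordQ k)) = - Dp k b := by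
  rw [moyalP_one']
  rw [Finset.sum_eq_single (k, false)]
  · show pSign (k, false) • (Dp k b * Dq k (piW0 (coordQ k))) = - Dp k b
    rw [Dq_piW0, pderivQ_coordQ, if_pos rfl, map_one, piW0_one]
    show (-1 : ℂ) • (Dp k b * (1 : W0 n)) = - Dp k b
    rw [mul_one]
    exact neg_one_smul ℂ (Dp k b)
  · rintro ⟨j, _ | _⟩ _ hne
    · show pSign (j, false) • (Dp j b * Dq j (piW0 (coordQ k))) = 0
      have hj : k ≠ j := fun h => hne (by rw [h])
      rw [Dq_piW0, pderivQ_coordQ, if_neg hj, map_zero, piW0_zero, mul_zero, smul_zero]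
    · show pSign (j, true) • (Dq j b * Dp j (piW0 (coordQ k))) = 0
      rw [Dp_piW0, mul_zero, smul_zero]
  · intro h
    exact absurd (Finset.mem_univ _) h

lemma ad_fstDeriv_coordQ (k : Fin n) (kb : Fin n × Bool) :
    AD (fstDeriv kb (piW0 (coordQ k))) := by
  rcases kb with ⟨j, _ | _⟩
  · show AD (Dp j (piW0 (coordQ k)))
    rw [Dp_piW0]; exact ad_zero
  · show AD (Dq j (piW0 (coordQ k)))
    rw [Dq_piW0, pderivQ_coordQ]; exact ad_piW0_algebraMap _

lemma ad_sndDeriv_coordQ (k : Fin n) (kb : Fin n × Bool) :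
    AD (sndDeriv kb (piW0 (coordQ k))) := by
  rcases kb with ⟨j, _ | _⟩
  · show AD (Dq j (piW0 (coordQ k)))
    rw [Dq_piW0, pderivQ_coordQ]; exact ad_piW0_algebraMap _
  · show AD (Dp j (piW0 (coordQ k)))
    rw [Dp_piW0]; exact ad_zero

lemma moyalP_coordQ_left_ge2 {r : ℕ} (hr : 2 ≤ r) (k : Fin n) (b : W0 n) :
    moyalP r (piW0 (coordQ k)) b = 0 := by
  apply Finset.sum_eq_zero
  intro t _
  have h : iterFst t (piW0 (coordQ k)) = 0 :=
    foldr_eq_zero_of_two_le _ (fun kb c hc => fstDeriv_of_ad hc kb)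
      (ad_fstDeriv_coordQ k) _ (by rw [List.length_ofFn]; exact hr)
  rw [h, zero_mul, smul_zero]

lemma moyalP_coordQ_right_ge2 {r : ℕ} (hr : 2 ≤ r) (k : Fin n) (b : W0 n) :
    moyalP r b (piW0 (coordQ k)) = 0 := by
  apply Finset.sum_eq_zero
  intro t _
  have h : iterSnd t (piW0 (coordQ k)) = 0 :=
    foldr_eq_zero_of_two_le _ (fun kb c hc => sndDeriv_of_ad hc kb)
      (ad_sndDeriv_coordQ k) _ (by rw [List.length_ofFn]; exact hr)
  rw [h, mul_zero, smul_zero]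

/-! #### `moyalP` vanishes on `p`-constant arguments (for `r ≥ 1`). -/

lemma moyalP_pc0_left {r : ℕ} (hr : 1 ≤ r) (f : Cinf n) {b : W0 n} (hb : PC0 b) :
    moyalP r (piW0 f) b = 0 := by
  obtain ⟨s, rfl⟩ : ∃ s, r = s + 1 := ⟨r - 1, (Nat.succ_pred_eq_of_pos hr).symm⟩
  apply Finset.sum_eq_zero
  intro t _
  have hfst : iterFst t (piW0 f) =
      fstDeriv (t 0) ((List.ofFn fun i : Fin s => t i.succ).foldr (fun kb x => fstDeriv kb x) (piW0 f)) := by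
    rw [iterFst, List.ofFn_succ, List.foldr_cons]
  have hsnd : iterSnd t b =
      sndDeriv (t 0) ((List.ofFn fun i : Fin s => t i.succ).foldr (fun kb x => sndDeriv kb x) b) := by
    rw [iterSnd, List.ofFn_succ, List.foldr_cons]
  rcases h0 : t 0 with ⟨j, bo⟩
  cases bo
  · -- `fstDeriv (j, false) = Dp j` kills the `p`-constant first factor
    have hpc : PC0 ((List.ofFn fun i : Fin s => t i.succ).foldr (fun kb x => fstDeriv kb x) (piW0 f)) :=
      foldr_pc0 _ (fun kb c hc => pc0_fstDeriv hc kb) (pc0_piW0 f) _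
    rw [hfst, h0]
    show _ • (Dp j _ * _) = 0
    rw [Dp_of_pc0 hpc, zero_mul, smul_zero]
  · -- `sndDeriv (j, true) = Dp j` kills the `p`-constant second factor
    have hpc : PC0 ((List.ofFn fun i : Fin s => t i.succ).foldr (fun kb x => sndDeriv kb x) b) :=
      foldr_pc0 _ (fun kb c hc => pc0_sndDeriv hc kb) hb _
    rw [hsnd, h0]
    show _ • (_ * Dp j _) = 0
    rw [Dp_of_pc0 hpc, mul_zero, smul_zero]

lemma moyalP_pc0_right {r : ℕ} (hr : 1 ≤ r) (f : Cinf n) {b : W0 n} (hb : PC0 b) :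
    moyalP r b (piW0 f) = 0 := by
  obtain ⟨s, rfl⟩ : ∃ s, r = s + 1 := ⟨r - 1, (Nat.succ_pred_eq_of_pos hr).symm⟩
  apply Finset.sum_eq_zero
  intro t _
  have hfst : iterFst t b =
      fstDeriv (t 0) ((List.ofFn fun i : Fin s => t i.succ).foldr (fun kb x => fstDeriv kb x) b) := by
    rw [iterFst, List.ofFn_succ, List.foldr_cons]
  have hsnd : iterSnd t (piW0 f) =
      sndDeriv (t 0) ((List.ofFn fun i : Fin s => t i.succ).foldr (fun kb x => sndDeriv kb x) (piW0 f)) := by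
    rw [iterSnd, List.ofFn_succ, List.foldr_cons]
  rcases h0 : t 0 with ⟨j, bo⟩
  cases bo
  · have hpc : PC0 ((List.ofFn fun i : Fin s => t i.succ).foldr (fun kb x => fstDeriv kb x) b) :=
      foldr_pc0 _ (fun kb c hc => pc0_fstDeriv hc kb) hb _
    rw [hfst, h0]
    show _ • (Dp j _ * _) = 0
    rw [Dp_of_pc0 hpc, zero_mul, smul_zero]
  · have hpc : PC0 ((List.ofFn fun i : Fin s => t i.succ).foldr (fun kb x => sndDeriv kb x) (piW0 f)) :=
      foldr_pc0 _ (fun kb c hc => pc0_sndDeriv hc kb) (pc0_piW0 f) _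
    rw [hsnd, h0]
    show _ • (_ * Dp j _) = 0
    rw [Dp_of_pc0 hpc, mul_zero, smul_zero]

/-! #### Coefficients of `weylMul` with one factor `π*(f)`. -/

/-- The scalar `(i/2)^r / r!`. -/
noncomputable def wc (r : ℕ) : ℂ := (Complex.I / 2) ^ r / (r.factorial : ℂ)

lemma wc_zero : wc 0 = 1 := by simp [wc]

lemma wc_one : wc 1 = Complex.I / 2 := by simp [wc]

lemma coeff_piW (f : Cinf n) (q : ℕ) :
    PowerSeries.coeff (R := (W0 n)) q (piW f) = if q = 0 then piW0 f else 0 :=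
  PowerSeries.coeff_C q (piW0 f)

lemma coeff_weylMul_piW_left (f : Cinf n) (a : Wf n) (ℓ : ℕ) :
    PowerSeries.coeff (R := (W0 n)) ℓ (weylMul (piW f) a) =
      ∑ p ∈ Finset.HasAntidiagonal.antidiagonal ℓ,
        wc p.1 • moyalP p.1 (piW0 f) (PowerSeries.coeff (R := (W0 n)) p.2 a) := by
  rw [weylMul, PowerSeries.coeff_mk]
  apply Finset.sum_congr rfl
  intro p _
  rw [Finset.sum_eq_single_of_mem ((0 : ℕ), p.2) (by simp [Finset.HasAntidiagonal.mem_antidiagonal])]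
  · rw [coeff_piW, if_pos rfl]
    rfl
  · intro q hq hne
    have hq1 : q.1 ≠ 0 := by
      intro h1
      apply hne
      have := Finset.HasAntidiagonal.mem_antidiagonal.mp hq
      rw [h1, zero_add] at this
      exact Prod.ext h1 this
    rw [coeff_piW, if_neg hq1, moyalP_left_zero, smul_zero]

lemma moyalP_right_zero (r : ℕ) (b : W0 n) : moyalP r b (0 : W0 n) = 0 := by
  apply Finset.sum_eq_zero
  intro t _
  rw [iterSnd_zero, mul_zero, smul_zero]

lemma coeff_weylMul_piW_right (f : Cinf n) (a : Wf n) (ℓ : ℕ) :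
    PowerSeries.coeff (R := (W0 n)) ℓ (weylMul a (piW f)) =
      ∑ p ∈ Finset.HasAntidiagonal.antidiagonal ℓ,
        wc p.1 • moyalP p.1 (PowerSeries.coeff (R := (W0 n)) p.2 a) (piW0 f) := by
  rw [weylMul, PowerSeries.coeff_mk]
  apply Finset.sum_congr rfl
  intro p _
  rw [Finset.sum_eq_single_of_mem (p.2, (0 : ℕ)) (by simp [Finset.HasAntidiagonal.mem_antidiagonal])]
  · rw [coeff_piW, if_pos rfl]
    rfl
  · intro q hq hne
    have hq2 : q.2 ≠ 0 := by
      intro h2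
      apply hne
      have := Finset.HasAntidiagonal.mem_antidiagonal.mp hq
      rw [h2, add_zero] at this
      exact Prod.ext this h2
    rw [coeff_piW, if_neg hq2, moyalP_right_zero, smul_zero]

/-! #### Lemma A : `p`-constant elements commute with all `π*(f)`. -/

lemma comm_of_pc0 {a : Wf n} (h : ∀ ℓ, PC0 (PowerSeries.coeff (R := (W0 n)) ℓ a)) :
    ∀ f : Cinf n, weylMul (piW f) a = weylMul a (piW f) := by
  intro f
  apply PowerSeries.ext
  intro ℓ
  rw [coeff_weylMul_piW_left, coeff_weylMul_piW_right]
  apply Finset.sum_congr rfl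
  intro p _
  rcases Nat.eq_zero_or_pos p.1 with h1 | h1
  · rw [h1, moyalP_zero', moyalP_zero', mul_comm]
  · rw [moyalP_pc0_left h1 f (h p.2), moyalP_pc0_right h1 f (h p.2)]

/-! #### Lemma B : commuting elements are `p`-constant. -/

lemma Dp_coeff_eq_zero {a : Wf n}
    (hc : ∀ f : Cinf n, weylMul (piW f) a = weylMul a (piW f)) (k : Fin n) (ℓ : ℕ) :
    Dp k (PowerSeries.coeff (R := (W0 n)) ℓ a) = 0 := by
  have h := congrArg (PowerSeries.coeff (R := (W0 n)) (ℓ + 1)) (hc (coordQ k))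
  rw [coeff_weylMul_piW_left, coeff_weylMul_piW_right] at h
  rw [Finset.Nat.sum_antidiagonal_eq_sum_range_succ_mk, Finset.Nat.sum_antidiagonal_eq_sum_range_succ_mk] at h
  have hsub : Finset.range 2 ⊆ Finset.range (ℓ + 1).succ := by
    apply Finset.range_subset_range.mpr
    omega
  rw [← Finset.sum_subset hsub (by
    intro i _ hi2
    have : 2 ≤ i := by simp at hi2; omega
    rw [moyalP_coordQ_left_ge2 this, smul_zero]),
    ← Finset.sum_subset hsub (by
    intro i _ hi2
    have : 2 ≤ i := by simp at hi2; omega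
    rw [moyalP_coordQ_right_ge2 this, smul_zero])] at h
  rw [Finset.sum_range_succ, Finset.sum_range_succ, Finset.sum_range_zero,
    Finset.sum_range_succ, Finset.sum_range_succ, Finset.sum_range_zero] at h
  simp only [zero_add] at h
  rw [moyalP_zero', moyalP_zero', moyalP_one_coordQ_left, moyalP_one_coordQ_right,
    wc_zero, wc_one, one_smul, one_smul, mul_comm] at h
  have h2 : ℓ + 1 - 1 = ℓ := by omega
  rw [h2] at h
  have h3 : (Complex.I / 2) • Dp k (PowerSeries.coeff (R := (W0 n)) ℓ a) =
      (Complex.I / 2) • (- Dp k (PowerSeries.coeff (R := (W0 n)) ℓ a)) := by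
    exact add_left_cancel h
  have h4 : Complex.I • Dp k (PowerSeries.coeff (R := (W0 n)) ℓ a) = 0 := by
    rw [smul_neg] at h3
    have h5 : (Complex.I / 2) • Dp k (PowerSeries.coeff (R := (W0 n)) ℓ a) +
        (Complex.I / 2) • Dp k (PowerSeries.coeff (R := (W0 n)) ℓ a) = 0 := by
      nth_rewrite 2 [h3]
      exact add_neg_cancel _
    rw [← add_smul] at h5
    have h6 : Complex.I / 2 + Complex.I / 2 = Complex.I := by ring
    rw [h6] at h5
    exact h5
  have h6 := congrArg (fun x => (- Complex.I) • x) h4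
  simp only [smul_smul, smul_zero] at h6
  have h7 : -Complex.I * Complex.I = 1 := by
    rw [neg_mul, Complex.I_mul_I, neg_neg]
  rw [h7, one_smul] at h6
  exact h6

lemma pc0_of_comm {a : Wf n}
    (hc : ∀ f : Cinf n, weylMul (piW f) a = weylMul a (piW f)) (ℓ : ℕ) :
    PC0 (PowerSeries.coeff (R := (W0 n)) ℓ a) := by
  intro m hm
  have hk : ∃ k, m k ≠ 0 := by
    by_contra hno
    push_neg at hno
    exact hm (Finsupp.ext hno)
  obtain ⟨k, hk⟩ := hk
  have hle : Finsupp.single k 1 ≤ m := Finsupp.single_le_iff.mpr (Nat.one_le_iff_ne_zero.mpr hk)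
  set b := PowerSeries.coeff (R := (W0 n)) ℓ a with hb
  set m' : Fin n →₀ ℕ := m - Finsupp.single k 1 with hm'
  have hmeq : m' + Finsupp.single k 1 = m := tsub_add_cancel_of_le hle
  have h : (m' k + 1 : ℕ) • b (m' + Finsupp.single k 1) = 0 :=
    congrFun (Dp_coeff_eq_zero hc k ℓ) m'
  rw [hmeq] at h
  have h2 : ((m' k + 1 : ℕ) : ℂ) • b m = 0 := by
    rw [Nat.cast_smul_eq_nsmul]
    exact h
  have hnz : ((m' k + 1 : ℕ) : ℂ) ≠ 0 :=
    Nat.cast_ne_zero.mpr (Nat.succ_ne_zero (m' k))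
  have h3 := congrArg (fun x => ((m' k + 1 : ℕ) : ℂ)⁻¹ • x) h2
  simp only [smul_smul, inv_mul_cancel₀ hnz, one_smul, smul_zero] at h3
  exact h3

/-! #### The embedding `piHat` and the constant-term map `E`. -/

lemma coeff_piHat (g : PowerSeries (Cinf n)) (ℓ : ℕ) :
    PowerSeries.coeff (R := (W0 n)) ℓ (piHat g) = piW0 (PowerSeries.coeff (R := (Cinf n)) ℓ g) :=
  PowerSeries.coeff_map (MvPowerSeries.C (σ := Fin n) (R := Cinf n)) ℓ g

/-- The constant-term map `W → C^∞(ℝⁿ)[[λ]]`. -/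
noncomputable def E (a : Wf n) : PowerSeries (Cinf n) :=
  PowerSeries.mk fun ℓ =>
    MvPowerSeries.constantCoeff (σ := Fin n) (R := Cinf n) (PowerSeries.coeff (R := (W0 n)) ℓ a)

lemma E_piHat (g : PowerSeries (Cinf n)) : E (piHat g) = g := by
  apply PowerSeries.ext
  intro ℓ
  rw [E, PowerSeries.coeff_mk, coeff_piHat, piW0, MvPowerSeries.constantCoeff_C]

lemma piHat_E {a : Wf n} (h : ∀ ℓ, PC0 (PowerSeries.coeff (R := (W0 n)) ℓ a)) :
    piHat (E a) = a := by
  apply PowerSeries.ext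
  intro ℓ
  rw [coeff_piHat, E, PowerSeries.coeff_mk]
  funext m
  by_cases hm : m = 0
  · subst hm
    rw [piW0_apply_zero]
    rfl
  · rw [pc0_piW0 _ m hm, h ℓ m hm]

lemma comm_iff (a : Wf n) :
    (∀ f : Cinf n, weylMul (piW f) a = weylMul a (piW f)) ↔ ∃ g, a = piHat g := by
  constructor
  · intro hc
    exact ⟨E a, (piHat_E (pc0_of_comm hc)).symm⟩
  · rintro ⟨g, rfl⟩
    apply comm_of_pc0
    intro ℓ
    rw [coeff_piHat]
    exact pc0_piW0 _

lemma piHat_add (g g' : PowerSeries (Cinf n)) : piHat (g + g') = piHat g + piHat g' :=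
  map_add (PowerSeries.map (MvPowerSeries.C (σ := Fin n) (R := Cinf n))) g g'

lemma lamSmulW_piHat (s : PowerSeries ℂ) (g : PowerSeries (Cinf n)) :
    lamSmulW s (piHat g) = piHat (lamSmulS s g) := by
  rw [lamSmulW, lamSmulS]
  have h1 : PowerSeries.map (algebraMap ℂ (W0 n)) s =
      piHat (PowerSeries.map (algebraMap ℂ (Cinf n)) s) := by
    apply PowerSeries.ext
    intro ℓ
    rw [PowerSeries.coeff_map, coeff_piHat, PowerSeries.coeff_map]
    exact MvPowerSeries.algebraMap_apply
  rw [h1, piHat]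
  exact (map_mul (PowerSeries.map (MvPowerSeries.C (σ := Fin n) (R := Cinf n))) _ _).symm

end HH0Aux


/-- The zeroth differential Hochschild cohomology
`HH⁰(C^∞(ℝⁿ,ℂ), W)`, i.e. the set of `a ∈ W` with `π*(f) ⋆_W a = a ⋆_W π*(f)` for all
`f`, is isomorphic to `C^∞(ℝⁿ,ℂ)[[λ]]` as a `ℂ[[λ]]`-module. -/
theorem hochschild_HH0_iso (n : ℕ) :
    ∃ e : {a : Wf n // ∀ f : Cinf n, weylMul (piW f) a = weylMul a (piW f)} ≃
          PowerSeries (Cinf n),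
      (∀ a b : {a : Wf n // ∀ f : Cinf n, weylMul (piW f) a = weylMul a (piW f)},
        ∃ c : {a : Wf n // ∀ f : Cinf n, weylMul (piW f) a = weylMul a (piW f)},
          (c : Wf n) = (a : Wf n) + (b : Wf n)) ∧
      (∀ (s : PowerSeries ℂ)
          (a : {a : Wf n // ∀ f : Cinf n, weylMul (piW f) a = weylMul a (piW f)}),
        ∃ b : {a : Wf n // ∀ f : Cinf n, weylMul (piW f) a = weylMul a (piW f)},
          (b : Wf n) = lamSmulW s (a : Wf n)) ∧
      (∀ a b c : {a : Wf n // ∀ f : Cinf n, weylMul (piW f) a = weylMul a (piW f)},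
        (c : Wf n) = (a : Wf n) + (b : Wf n) → e c = e a + e b) ∧
      (∀ (s : PowerSeries ℂ)
          (a b : {a : Wf n // ∀ f : Cinf n, weylMul (piW f) a = weylMul a (piW f)}),
        (b : Wf n) = lamSmulW s (a : Wf n) → e b = lamSmulS s (e a)) := by
  refine ⟨{ toFun := fun a => HH0Aux.E a.1
            invFun := fun g => ⟨piHat g, (HH0Aux.comm_iff _).mpr ⟨g, rfl⟩⟩
            left_inv := ?_
            right_inv := fun g => HH0Aux.E_piHat g }, ?_, ?_, ?_, ?_⟩
  · intro a
    apply Subtype.ext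
    obtain ⟨g, hg⟩ := (HH0Aux.comm_iff a.1).mp a.2
    show piHat (HH0Aux.E a.1) = a.1
    rw [hg, HH0Aux.E_piHat]
  · intro a b
    obtain ⟨ga, hga⟩ := (HH0Aux.comm_iff a.1).mp a.2
    obtain ⟨gb, hgb⟩ := (HH0Aux.comm_iff b.1).mp b.2
    exact ⟨⟨a.1 + b.1, (HH0Aux.comm_iff _).mpr
      ⟨ga + gb, by rw [hga, hgb, HH0Aux.piHat_add]⟩⟩, rfl⟩
  · intro s a
    obtain ⟨ga, hga⟩ := (HH0Aux.comm_iff a.1).mp a.2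
    exact ⟨⟨lamSmulW s a.1, (HH0Aux.comm_iff _).mpr
      ⟨lamSmulS s ga, by rw [hga, HH0Aux.lamSmulW_piHat]⟩⟩, rfl⟩
  · intro a b c h
    obtain ⟨ga, hga⟩ := (HH0Aux.comm_iff a.1).mp a.2
    obtain ⟨gb, hgb⟩ := (HH0Aux.comm_iff b.1).mp b.2
    show HH0Aux.E c.1 = HH0Aux.E a.1 + HH0Aux.E b.1
    rw [h, hga, hgb, ← HH0Aux.piHat_add, HH0Aux.E_piHat, HH0Aux.E_piHat, HH0Aux.E_piHat]
  · intro s a b h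
    obtain ⟨ga, hga⟩ := (HH0Aux.comm_iff a.1).mp a.2
    show HH0Aux.E b.1 = lamSmulS s (HH0Aux.E a.1)
    rw [h, hga, HH0Aux.lamSmulW_piHat, HH0Aux.E_piHat, HH0Aux.E_piHat]
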